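/- If T is self-adjoint with ‖T‖ < 1 and satisfies the braid relation, then P₃ = (1 + T₂)(1 + T₁ + T₁T₂) is strictly positive (positive and invertible). -/

import Mathlib

/-- `ampl1 d T` is the amplification `T ⊗ 1` of an operator `T` on
`ℂ^d ⊗ ℂ^d` (modelled as `EuclideanSpace ℂ (Fin d × Fin d)`) to the triple
tensor power, acting on the first two tensor factors. -/
noncomputable def ampl1 (d : ℕ)
    (T : EuclideanSpace ℂ (Fin d × Fin d) →L[ℂ] EuclideanSpace ℂ (Fin d × Fin d)) :
    EuclideanSpace ℂ (Fin d × Fin d × Fin d) →L[ℂ] EuclideanSpace ℂ (Fin d × Fin d × Fin d) :=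
  LinearMap.toContinuousLinearMap
    { toFun := fun x => WithLp.toLp 2 ((fun p =>
        T (WithLp.toLp 2 (fun r => x (r.1, r.2, p.2.2) : Fin d × Fin d → ℂ)) (p.1, p.2.1)
        : Fin d × Fin d × Fin d → ℂ))
      map_add' := by
        intro x y; ext p
        have : (WithLp.toLp 2 (fun r => (x + y) (r.1, r.2, p.2.2) : Fin d × Fin d → ℂ) :
            EuclideanSpace ℂ (Fin d × Fin d)) =
            (WithLp.toLp 2 (fun r => x (r.1, r.2, p.2.2) : Fin d × Fin d → ℂ) :
            EuclideanSpace ℂ (Fin d × Fin d)) +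
            WithLp.toLp 2 (fun r => y (r.1, r.2, p.2.2) : Fin d × Fin d → ℂ) := rfl
        show T _ _ = _
        rw [this, map_add]; rfl
      map_smul' := by
        intro c x; ext p
        have : (WithLp.toLp 2 (fun r => (c • x) (r.1, r.2, p.2.2) : Fin d × Fin d → ℂ) :
            EuclideanSpace ℂ (Fin d × Fin d)) =
            c • (WithLp.toLp 2 (fun r => x (r.1, r.2, p.2.2) : Fin d × Fin d → ℂ) :
            EuclideanSpace ℂ (Fin d × Fin d)) := rfl
        show T _ _ = _
        rw [this, map_smul]; rfl }

/-- `ampl2 d T` is the amplification `1 ⊗ T`, acting on the last two tensor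
factors of the triple tensor power. -/
noncomputable def ampl2 (d : ℕ)
    (T : EuclideanSpace ℂ (Fin d × Fin d) →L[ℂ] EuclideanSpace ℂ (Fin d × Fin d)) :
    EuclideanSpace ℂ (Fin d × Fin d × Fin d) →L[ℂ] EuclideanSpace ℂ (Fin d × Fin d × Fin d) :=
  LinearMap.toContinuousLinearMap
    { toFun := fun x => WithLp.toLp 2 ((fun p =>
        T (WithLp.toLp 2 (fun r => x (p.1, r.1, r.2) : Fin d × Fin d → ℂ)) (p.2.1, p.2.2)
        : Fin d × Fin d × Fin d → ℂ))
      map_add' := by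
        intro x y; ext p
        have : (WithLp.toLp 2 (fun r => (x + y) (p.1, r.1, r.2) : Fin d × Fin d → ℂ) :
            EuclideanSpace ℂ (Fin d × Fin d)) =
            (WithLp.toLp 2 (fun r => x (p.1, r.1, r.2) : Fin d × Fin d → ℂ) :
            EuclideanSpace ℂ (Fin d × Fin d)) +
            WithLp.toLp 2 (fun r => y (p.1, r.1, r.2) : Fin d × Fin d → ℂ) := rfl
        show T _ _ = _
        rw [this, map_add]; rfl
      map_smul' := by
        intro c x; ext p
        have : (WithLp.toLp 2 (fun r => (c • x) (p.1, r.1, r.2) : Fin d × Fin d → ℂ) :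
            EuclideanSpace ℂ (Fin d × Fin d)) =
            c • (WithLp.toLp 2 (fun r => x (p.1, r.1, r.2) : Fin d × Fin d → ℂ) :
            EuclideanSpace ℂ (Fin d × Fin d)) := rfl
        show T _ _ = _
        rw [this, map_smul]; rfl }

section AmplLemmas

variable {d : ℕ} (T : EuclideanSpace ℂ (Fin d × Fin d) →L[ℂ] EuclideanSpace ℂ (Fin d × Fin d))

/-- Slice of a triple-indexed vector with last index fixed. -/
def slice1 (d : ℕ) (k : Fin d) (x : EuclideanSpace ℂ (Fin d × Fin d × Fin d)) :
    EuclideanSpace ℂ (Fin d × Fin d) := WithLp.toLp 2 (fun r => x (r.1, r.2, k) : Fin d × Fin d → ℂ)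

/-- Slice of a triple-indexed vector with first index fixed. -/
def slice2 (d : ℕ) (i : Fin d) (x : EuclideanSpace ℂ (Fin d × Fin d × Fin d)) :
    EuclideanSpace ℂ (Fin d × Fin d) := WithLp.toLp 2 (fun r => x (i, r.1, r.2) : Fin d × Fin d → ℂ)

lemma slice1_ampl1 (k : Fin d) (x : EuclideanSpace ℂ (Fin d × Fin d × Fin d)) :
    slice1 d k (ampl1 d T x) = T (slice1 d k x) := rfl

lemma slice2_ampl2 (i : Fin d) (x : EuclideanSpace ℂ (Fin d × Fin d × Fin d)) :
    slice2 d i (ampl2 d T x) = T (slice2 d i x) := rfl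

/-- Reindexing equivalence moving the third coordinate to the front. -/
def tripleEquiv (d : ℕ) : (Fin d × Fin d × Fin d) ≃ (Fin d × (Fin d × Fin d)) where
  toFun p := (p.2.2, (p.1, p.2.1))
  invFun q := (q.2.1, q.2.2, q.1)
  left_inv p := rfl
  right_inv q := rfl

lemma inner_ampl1 (x y : EuclideanSpace ℂ (Fin d × Fin d × Fin d)) :
    (inner ℂ (ampl1 d T x) y : ℂ) = ∑ k : Fin d, (inner ℂ (T (slice1 d k x)) (slice1 d k y) : ℂ) := by
  simp only [PiLp.inner_apply, RCLike.inner_apply']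
  have h1 : (∑ p : Fin d × Fin d × Fin d, (starRingEnd ℂ) ((ampl1 d T) x p) * y p)
      = ∑ q : Fin d × (Fin d × Fin d),
          (starRingEnd ℂ) (T (slice1 d q.1 x) q.2) * slice1 d q.1 y q.2 :=
    Fintype.sum_equiv (tripleEquiv d) _ _ (fun p => rfl)
  rw [h1, Fintype.sum_prod_type]

lemma inner_ampl2 (x y : EuclideanSpace ℂ (Fin d × Fin d × Fin d)) :
    (inner ℂ (ampl2 d T x) y : ℂ) = ∑ i : Fin d, (inner ℂ (T (slice2 d i x)) (slice2 d i y) : ℂ) := by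
  simp only [PiLp.inner_apply, RCLike.inner_apply']
  have h1 : (∑ p : Fin d × Fin d × Fin d, (starRingEnd ℂ) ((ampl2 d T) x p) * y p)
      = ∑ q : Fin d × (Fin d × Fin d),
          (starRingEnd ℂ) (T (slice2 d q.1 x) q.2) * slice2 d q.1 y q.2 :=
    Fintype.sum_equiv (Equiv.refl _) _ _ (fun p => rfl)
  rw [h1, Fintype.sum_prod_type]

lemma ampl1_one : ampl1 d (1 : EuclideanSpace ℂ (Fin d × Fin d) →L[ℂ] EuclideanSpace ℂ (Fin d × Fin d)) = 1 := by
  ext x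
  rfl

lemma ampl2_one : ampl2 d (1 : EuclideanSpace ℂ (Fin d × Fin d) →L[ℂ] EuclideanSpace ℂ (Fin d × Fin d)) = 1 := by
  ext x
  rfl

lemma inner_slice1 (x y : EuclideanSpace ℂ (Fin d × Fin d × Fin d)) :
    (inner ℂ x y : ℂ) = ∑ k : Fin d, (inner ℂ (slice1 d k x) (slice1 d k y) : ℂ) := by
  have h := inner_ampl1 (d := d) 1 x y
  simpa [ampl1_one] using h

lemma inner_slice2 (x y : EuclideanSpace ℂ (Fin d × Fin d × Fin d)) :
    (inner ℂ x y : ℂ) = ∑ i : Fin d, (inner ℂ (slice2 d i x) (slice2 d i y) : ℂ) := by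
  have h := inner_ampl2 (d := d) 1 x y
  simpa [ampl2_one] using h


lemma ampl1_isSelfAdjoint (hsa : IsSelfAdjoint T) : IsSelfAdjoint (ampl1 d T) := by
  rw [ContinuousLinearMap.isSelfAdjoint_iff_isSymmetric] at hsa ⊢
  intro x y
  show (inner ℂ (ampl1 d T x) y : ℂ) = inner ℂ x (ampl1 d T y)
  calc (inner ℂ (ampl1 d T x) y : ℂ)
      = ∑ k : Fin d, (inner ℂ (T (slice1 d k x)) (slice1 d k y) : ℂ) := inner_ampl1 T x y
    _ = ∑ k : Fin d, (inner ℂ (slice1 d k x) (T (slice1 d k y)) : ℂ) :=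
        Finset.sum_congr rfl fun k _ => hsa _ _
    _ = inner ℂ x (ampl1 d T y) := by
        rw [← inner_conj_symm x, inner_ampl1, map_sum]
        exact Finset.sum_congr rfl fun k _ => by rw [inner_conj_symm]

lemma ampl2_isSelfAdjoint (hsa : IsSelfAdjoint T) : IsSelfAdjoint (ampl2 d T) := by
  rw [ContinuousLinearMap.isSelfAdjoint_iff_isSymmetric] at hsa ⊢
  intro x y
  show (inner ℂ (ampl2 d T x) y : ℂ) = inner ℂ x (ampl2 d T y)
  calc (inner ℂ (ampl2 d T x) y : ℂ)
      = ∑ i : Fin d, (inner ℂ (T (slice2 d i x)) (slice2 d i y) : ℂ) := inner_ampl2 T x y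
    _ = ∑ i : Fin d, (inner ℂ (slice2 d i x) (T (slice2 d i y)) : ℂ) :=
        Finset.sum_congr rfl fun i _ => hsa _ _
    _ = inner ℂ x (ampl2 d T y) := by
        rw [← inner_conj_symm x, inner_ampl2, map_sum]
        exact Finset.sum_congr rfl fun i _ => by rw [inner_conj_symm]

lemma ampl1_norm_le : ‖ampl1 d T‖ ≤ ‖T‖ := by
  refine ContinuousLinearMap.opNorm_le_bound _ (norm_nonneg T) fun x => ?_
  have h1 : ‖ampl1 d T x‖ ^ 2 = ∑ k : Fin d, ‖T (slice1 d k x)‖ ^ 2 := by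
    rw [← @inner_self_eq_norm_sq ℂ, inner_ampl1]
    rw [map_sum]
    exact Finset.sum_congr rfl fun k _ => by
      rw [slice1_ampl1, @inner_self_eq_norm_sq ℂ]
  have h2 : ‖x‖ ^ 2 = ∑ k : Fin d, ‖slice1 d k x‖ ^ 2 := by
    rw [← @inner_self_eq_norm_sq ℂ, inner_slice1, map_sum]
    exact Finset.sum_congr rfl fun k _ => by rw [@inner_self_eq_norm_sq ℂ]
  have h3 : ‖ampl1 d T x‖ ^ 2 ≤ (‖T‖ * ‖x‖) ^ 2 := by
    rw [h1]
    calc (∑ k : Fin d, ‖T (slice1 d k x)‖ ^ 2)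
        ≤ ∑ k : Fin d, ‖T‖ ^ 2 * ‖slice1 d k x‖ ^ 2 := by
          refine Finset.sum_le_sum fun k _ => ?_
          have := T.le_opNorm (slice1 d k x)
          nlinarith [norm_nonneg (T (slice1 d k x)), norm_nonneg (slice1 d k x),
            norm_nonneg T]
      _ = (‖T‖ * ‖x‖) ^ 2 := by rw [← Finset.mul_sum, ← h2]; ring
  have h4 : (0:ℝ) ≤ ‖T‖ * ‖x‖ := mul_nonneg (norm_nonneg _) (norm_nonneg _)
  exact le_of_pow_le_pow_left₀ two_ne_zero h4 h3

lemma ampl2_norm_le : ‖ampl2 d T‖ ≤ ‖T‖ := by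
  refine ContinuousLinearMap.opNorm_le_bound _ (norm_nonneg T) fun x => ?_
  have h1 : ‖ampl2 d T x‖ ^ 2 = ∑ i : Fin d, ‖T (slice2 d i x)‖ ^ 2 := by
    rw [← @inner_self_eq_norm_sq ℂ, inner_ampl2]
    rw [map_sum]
    exact Finset.sum_congr rfl fun i _ => by
      rw [slice2_ampl2, @inner_self_eq_norm_sq ℂ]
  have h2 : ‖x‖ ^ 2 = ∑ i : Fin d, ‖slice2 d i x‖ ^ 2 := by
    rw [← @inner_self_eq_norm_sq ℂ, inner_slice2, map_sum]
    exact Finset.sum_congr rfl fun i _ => by rw [@inner_self_eq_norm_sq ℂ]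
  have h3 : ‖ampl2 d T x‖ ^ 2 ≤ (‖T‖ * ‖x‖) ^ 2 := by
    rw [h1]
    calc (∑ i : Fin d, ‖T (slice2 d i x)‖ ^ 2)
        ≤ ∑ i : Fin d, ‖T‖ ^ 2 * ‖slice2 d i x‖ ^ 2 := by
          refine Finset.sum_le_sum fun i _ => ?_
          have := T.le_opNorm (slice2 d i x)
          nlinarith [norm_nonneg (T (slice2 d i x)), norm_nonneg (slice2 d i x),
            norm_nonneg T]
      _ = (‖T‖ * ‖x‖) ^ 2 := by rw [← Finset.mul_sum, ← h2]; ring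
  have h4 : (0:ℝ) ≤ ‖T‖ * ‖x‖ := mul_nonneg (norm_nonneg _) (norm_nonneg _)
  exact le_of_pow_le_pow_left₀ two_ne_zero h4 h3

end AmplLemmas

section AbstractHalmos
open ContinuousLinearMap RCLike

variable {E : Type*} [NormedAddCommGroup E] [InnerProductSpace ℂ E] [CompleteSpace E]

local notation "⟪" x ", " y "⟫" => @inner ℂ _ _ x y

lemma quad_zero (a b : ℝ) (ha : 0 ≤ a) (h : ∀ t : ℝ, 0 ≤ a * t ^ 2 + b * t) : b = 0 := by
  have h1 : 0 < a + 1 := by linarith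
  have e : a * (-b / (a + 1)) ^ 2 + b * (-b / (a + 1)) = -b ^ 2 / (a + 1) ^ 2 := by
    field_simp; ring
  have h2 := h (-b / (a + 1))
  rw [e] at h2
  rcases div_nonneg_iff.mp h2 with ⟨h3, _⟩ | ⟨_, h4⟩
  · nlinarith [sq_nonneg b]
  · nlinarith [sq_nonneg (a + 1)]

lemma psd_apply_eq_zero {P : E →L[ℂ] E} (hP : P.IsPositive) {x : E}
    (hx : re ⟪P x, x⟫ = 0) : P x = 0 := by
  have hsym : (P : E →ₗ[ℂ] E).IsSymmetric :=
    ContinuousLinearMap.isSelfAdjoint_iff_isSymmetric.mp hP.isSelfAdjoint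
  have key : ∀ y : E, re ⟪P x, y⟫ = 0 := by
    intro y
    have hq : ∀ t : ℝ, 0 ≤ re ⟪P y, y⟫ * t ^ 2 + (2 * re ⟪P x, y⟫) * t := by
      intro t
      have h0 := hP.2 (x + (t : ℂ) • y)
      rw [ContinuousLinearMap.reApplyInnerSelf_apply] at h0
      have hyx : ⟪P y, x⟫ = (starRingEnd ℂ) ⟪P x, y⟫ :=
        (hsym y x).trans (inner_conj_symm _ _).symm
      have expand : ⟪P (x + (t : ℂ) • y), x + (t : ℂ) • y⟫
          = ⟪P x, x⟫ + (t : ℂ) * ⟪P x, y⟫ + (t : ℂ) * (starRingEnd ℂ) ⟪P x, y⟫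
            + ((t : ℝ) * t : ℝ) * ⟪P y, y⟫ := by
        rw [map_add, map_smul, inner_add_left, inner_add_right, inner_add_right,
          inner_smul_left, inner_smul_right, inner_smul_left, inner_smul_right, hyx]
        push_cast
        simp only [Complex.conj_ofReal]
        ring
      rw [expand] at h0
      simp only [RCLike.re_to_complex, Complex.add_re, Complex.re_ofReal_mul,
        Complex.conj_re] at h0 hx ⊢
      rw [hx] at h0
      nlinarith [h0]
    have ha := hP.2 y
    rw [ContinuousLinearMap.reApplyInnerSelf_apply] at ha
    have := quad_zero _ _ ha hq
    linarith
  have key2 : ∀ y : E, ⟪P x, y⟫ = 0 := by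
    intro y
    have h1 := key y
    have h2 := key (Complex.I • y)
    rw [inner_smul_right] at h2
    simp only [RCLike.re_to_complex, Complex.mul_re, Complex.I_re, Complex.I_im] at h1 h2
    apply Complex.ext <;> simp only [Complex.zero_re, Complex.zero_im] <;> nlinarith [h1, h2]
  exact inner_self_eq_zero.mp (key2 (P x))

lemma isUnit_of_injective [FiniteDimensional ℂ E] {P : E →L[ℂ] E}
    (h : Function.Injective P) : IsUnit P := by
  have hbij : Function.Bijective (P : E →ₗ[ℂ] E) :=
    ⟨h, (LinearMap.injective_iff_surjective).mp h⟩
  let e : E ≃ₗ[ℂ] E := LinearEquiv.ofBijective (P : E →ₗ[ℂ] E) hbij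
  let ec : E ≃L[ℂ] E := e.toContinuousLinearEquiv
  refine ⟨⟨P, ec.symm.toContinuousLinearMap, ?_, ?_⟩, rfl⟩
  · ext x
    simp only [ContinuousLinearMap.mul_apply, ContinuousLinearMap.one_apply,
      ContinuousLinearEquiv.coe_coe]
    show P (ec.symm x) = x
    have : P (ec.symm x) = ec (ec.symm x) := rfl
    rw [this, ec.apply_symm_apply]
  · ext x
    simp only [ContinuousLinearMap.mul_apply, ContinuousLinearMap.one_apply,
      ContinuousLinearEquiv.coe_coe]
    show ec.symm (P x) = x
    have : P x = ec x := rfl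
    rw [this, ec.symm_apply_apply]

lemma unit_apply_eq_zero {P : E →L[ℂ] E} (h : IsUnit P) {x : E} (hx : P x = 0) : x = 0 := by
  obtain ⟨u, hu⟩ := h
  have h1 : ((↑u⁻¹ * ↑u : E →L[ℂ] E)) x = x := by
    rw [u.inv_mul]; rfl
  rw [ContinuousLinearMap.mul_apply, hu, hx, map_zero] at h1
  exact h1.symm

lemma braid_injective {A B : E →L[ℂ] E} (hA : ‖A‖ < 1) (hB : ‖B‖ < 1)
    (hbraid : A * B * A = B * A * B) :
    Function.Injective ⇑((1 + B) * (1 + A + A * B) : E →L[ℂ] E) := by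
  have hKer : ∀ x : E, ((1 + B) * (1 + A + A * B) : E →L[ℂ] E) x = 0 → x = 0 := by
    intro x hx
    have hUB : IsUnit (1 + B) := by
      have h := isUnit_one_sub_of_norm_lt_one (x := -B) (by rwa [norm_neg])
      rwa [sub_neg_eq_add] at h
    have hUA : IsUnit (1 + A) := by
      have h := isUnit_one_sub_of_norm_lt_one (x := -A) (by rwa [norm_neg])
      rwa [sub_neg_eq_add] at h
    have e1 : (1 + A + A * B) x = 0 := by
      apply unit_apply_eq_zero hUB
      rw [← ContinuousLinearMap.mul_apply, hx]
    have hfact : (1 + A) * (1 + B + B * A) = (1 + B) * (1 + A + A * B) := by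
      have l1 : (1 + A) * (1 + B + B * A) = 1 + A + B + A * B + B * A + A * B * A := by
        noncomm_ring
      have l2 : (1 + B) * (1 + A + A * B) = 1 + A + B + A * B + B * A + B * A * B := by
        noncomm_ring
      rw [l1, l2, hbraid]
    have e2 : (1 + B + B * A) x = 0 := by
      apply unit_apply_eq_zero hUA
      rw [← ContinuousLinearMap.mul_apply, hfact, hx]
    have e1' : x + A x = -(A (B x)) := by
      have h1 : x + A x + A (B x) = 0 := by
        simpa [ContinuousLinearMap.add_apply, ContinuousLinearMap.mul_apply] using e1
      linear_combination (norm := abel) h1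
    have e2' : x = B (A (B x)) := by
      have h2 : x + B x + B (A x) = 0 := by
        simpa [ContinuousLinearMap.add_apply, ContinuousLinearMap.mul_apply] using e2
      have h3 : x + B (x + A x) = 0 := by
        rw [map_add, ← add_assoc]; exact h2
      rw [e1', map_neg] at h3
      linear_combination (norm := abel) h3
    by_contra hx0
    have hxpos : 0 < ‖x‖ := norm_pos_iff.mpr hx0
    have hchain : ‖x‖ ≤ ‖B‖ * (‖A‖ * (‖B‖ * ‖x‖)) := by
      conv_lhs => rw [e2']
      calc ‖B (A (B x))‖ ≤ ‖B‖ * ‖A (B x)‖ := B.le_opNorm _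
        _ ≤ ‖B‖ * (‖A‖ * ‖B x‖) :=
            mul_le_mul_of_nonneg_left (A.le_opNorm _) (norm_nonneg _)
        _ ≤ ‖B‖ * (‖A‖ * (‖B‖ * ‖x‖)) :=
            mul_le_mul_of_nonneg_left
              (mul_le_mul_of_nonneg_left (B.le_opNorm _) (norm_nonneg _)) (norm_nonneg _)
    have ha0 : (0:ℝ) ≤ ‖A‖ := norm_nonneg _
    have hb0 : (0:ℝ) ≤ ‖B‖ := norm_nonneg _
    have hb2 : ‖B‖ * ‖B‖ < 1 := by nlinarith
    have h1 : ‖A‖ * ‖B‖ ≤ ‖B‖ := by nlinarith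
    have h2 : ‖B‖ * (‖A‖ * ‖B‖) ≤ ‖B‖ * ‖B‖ := mul_le_mul_of_nonneg_left h1 hb0
    nlinarith [hchain, hxpos, hb2, h2]
  intro a b hab
  have : a - b = 0 := hKer _ (by rw [map_sub, hab, sub_self])
  exact sub_eq_zero.mp this

lemma isUnit_injective {P : E →L[ℂ] E} (h : IsUnit P) : Function.Injective ⇑P := by
  intro a b hab
  have : a - b = 0 := unit_apply_eq_zero h (by rw [map_sub, hab, sub_self])
  exact sub_eq_zero.mp this

lemma coercive [FiniteDimensional ℂ E] [Nontrivial E] {P : E →L[ℂ] E}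
    (hP : P.IsPositive) (hu : IsUnit P) :
    ∃ c : ℝ, 0 < c ∧ ∀ x : E, c * (‖x‖ * ‖x‖) ≤ P.reApplyInnerSelf x := by
  have hcont : Continuous fun x : E => P.reApplyInnerSelf x := by
    simp only [ContinuousLinearMap.reApplyInnerSelf_apply]
    exact RCLike.continuous_re.comp (Continuous.inner P.continuous continuous_id)
  have hsphere : (Metric.sphere (0:E) 1).Nonempty :=
    NormedSpace.sphere_nonempty.mpr zero_le_one
  obtain ⟨x₀, hx₀mem, hx₀min⟩ :=
    (isCompact_sphere (0:E) 1).exists_isMinOn hsphere hcont.continuousOn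
  have hx₀norm : ‖x₀‖ = 1 := by simpa using mem_sphere_zero_iff_norm.mp hx₀mem
  set c := P.reApplyInnerSelf x₀ with hc
  have hc0 : 0 ≤ c := hP.2 x₀
  have hcpos : 0 < c := by
    rcases hc0.lt_or_eq with h | h
    · exact h
    · exfalso
      have hz : P x₀ = 0 := by
        apply psd_apply_eq_zero hP
        rw [← ContinuousLinearMap.reApplyInnerSelf_apply, ← hc, ← h]
      have : x₀ = 0 := isUnit_injective hu (by rw [hz, map_zero])
      rw [this, norm_zero] at hx₀norm
      norm_num at hx₀norm
  refine ⟨c, hcpos, fun x => ?_⟩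
  by_cases hx : x = 0
  · simp [hx, ContinuousLinearMap.reApplyInnerSelf_apply]
  · have hxn : (0:ℝ) < ‖x‖ := norm_pos_iff.mpr hx
    set y : E := ((‖x‖⁻¹ : ℝ) : ℂ) • x with hy
    have hyn : ‖y‖ = 1 := by
      rw [hy, norm_smul]
      simp [abs_of_pos (inv_pos.mpr hxn), inv_mul_cancel₀ (ne_of_gt hxn)]
    have hymem : y ∈ Metric.sphere (0:E) 1 := by
      simpa [mem_sphere_zero_iff_norm] using hyn
    have hmin := hx₀min hymem
    have hxy : x = ((‖x‖ : ℝ) : ℂ) • y := by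
      rw [hy, smul_smul]
      norm_cast
      rw [mul_inv_cancel₀ (ne_of_gt hxn)]
      simp
    have hscale : P.reApplyInnerSelf x = ‖x‖ ^ 2 * P.reApplyInnerSelf y := by
      conv_lhs => rw [hxy]
      rw [ContinuousLinearMap.reApplyInnerSelf_smul]
      norm_num [abs_of_pos hxn]
    rw [hscale]
    have : c ≤ P.reApplyInnerSelf y := hmin
    nlinarith [hxn, this, hcpos]

theorem abstract_P3 [FiniteDimensional ℂ E] [Nontrivial E]
    {A B : E →L[ℂ] E} (hA : IsSelfAdjoint A) (hB : IsSelfAdjoint B)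
    (hnA : ‖A‖ < 1) (hnB : ‖B‖ < 1) (hbraid : A * B * A = B * A * B) :
    ((1 + B) * (1 + A + A * B)).IsPositive ∧ IsUnit ((1 + B) * (1 + A + A * B)) := by
  set f : ℝ → (E →L[ℂ] E) := fun s =>
    (1 + (s:ℂ) • B) * (1 + (s:ℂ) • A + ((s:ℂ) • A) * ((s:ℂ) • B)) with hf
  have key : ∀ s : ℝ, |s| ≤ 1 → IsSelfAdjoint (f s) ∧ IsUnit (f s) := by
    intro s hs
    set A' := (s:ℂ) • A with hA'def
    set B' := (s:ℂ) • B with hB'def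
    have hA' : IsSelfAdjoint A' := by
      rw [hA'def, IsSelfAdjoint, star_smul, hA.star_eq]
      congr 1
      rw [Complex.star_def, Complex.conj_ofReal]
    have hB' : IsSelfAdjoint B' := by
      rw [hB'def, IsSelfAdjoint, star_smul, hB.star_eq]
      congr 1
      rw [Complex.star_def, Complex.conj_ofReal]
    have hnA' : ‖A'‖ < 1 := by
      rw [hA'def, norm_smul, Complex.norm_real, Real.norm_eq_abs]
      calc |s| * ‖A‖ ≤ 1 * ‖A‖ := mul_le_mul_of_nonneg_right hs (norm_nonneg _)
        _ = ‖A‖ := one_mul _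
        _ < 1 := hnA
    have hnB' : ‖B'‖ < 1 := by
      rw [hB'def, norm_smul, Complex.norm_real, Real.norm_eq_abs]
      calc |s| * ‖B‖ ≤ 1 * ‖B‖ := mul_le_mul_of_nonneg_right hs (norm_nonneg _)
        _ = ‖B‖ := one_mul _
        _ < 1 := hnB
    have hbraid' : A' * B' * A' = B' * A' * B' := by
      rw [hA'def, hB'def]
      simp only [smul_mul_assoc, mul_smul_comm, smul_smul]
      rw [hbraid]
    have hfs : f s = (1 + B') * (1 + A' + A' * B') := rfl
    constructor
    · rw [hfs]
      rw [IsSelfAdjoint]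
      have hst : star ((1 + B') * (1 + A' + A' * B')) = (1 + A' + B' * A') * (1 + B') := by
        simp only [star_mul, star_add, star_one, hA'.star_eq, hB'.star_eq]
      rw [hst]
      have l1 : (1 + A' + B' * A') * (1 + B') = 1 + A' + B' + A' * B' + B' * A' + B' * A' * B' := by
        noncomm_ring
      have l2 : (1 + B') * (1 + A' + A' * B') = 1 + A' + B' + A' * B' + B' * A' + B' * A' * B' := by
        noncomm_ring
      rw [l1, l2]
    · rw [hfs]
      exact isUnit_of_injective (braid_injective hnA' hnB' hbraid')
  have hfc : Continuous f := by
    have h1 : Continuous fun s : ℝ => ((s:ℂ) • A) :=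
      (Complex.continuous_ofReal).smul continuous_const
    have h2 : Continuous fun s : ℝ => ((s:ℂ) • B) :=
      (Complex.continuous_ofReal).smul continuous_const
    exact ((continuous_const.add h2).mul
      ((continuous_const.add h1).add (h1.mul h2)))
  -- the set of parameters where f is positive
  haveI : PreconnectedSpace (Set.Icc (0:ℝ) 1) :=
    Subtype.preconnectedSpace isPreconnected_Icc
  set S : Set (Set.Icc (0:ℝ) 1) := {s | (f ↑s).IsPositive} with hS
  have habs : ∀ s : Set.Icc (0:ℝ) 1, |(s:ℝ)| ≤ 1 := by
    intro s
    rw [abs_le]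
    exact ⟨by linarith [s.2.1], s.2.2⟩
  have hSclosed : IsClosed S := by
    have : S = ⋂ x : E, {s : Set.Icc (0:ℝ) 1 | 0 ≤ (f ↑s).reApplyInnerSelf x} := by
      ext s
      simp only [Set.mem_iInter, Set.mem_setOf_eq, hS]
      constructor
      · exact fun h x => h.2 x
      · exact fun h => ContinuousLinearMap.isPositive_def'.mpr ⟨(key ↑s (habs s)).1, h⟩
    rw [this]
    refine isClosed_iInter fun x => ?_
    have hc : Continuous fun s : Set.Icc (0:ℝ) 1 => (f ↑s).reApplyInnerSelf x := by
      simp only [ContinuousLinearMap.reApplyInnerSelf_apply]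
      refine RCLike.continuous_re.comp (Continuous.inner ?_ continuous_const)
      exact (hfc.comp continuous_subtype_val).clm_apply continuous_const
    exact isClosed_le continuous_const hc
  have hSopen : IsOpen S := by
    rw [Metric.isOpen_iff]
    intro s₀ hs₀
    obtain ⟨c, hcpos, hcoer⟩ := coercive hs₀ (key ↑s₀ (habs s₀)).2
    have hcontat : ContinuousAt f ↑s₀ := hfc.continuousAt
    obtain ⟨δ, hδpos, hδ⟩ := Metric.continuousAt_iff.mp hcontat c hcpos
    refine ⟨δ, hδpos, fun t ht => ?_⟩
    have hdist : dist (t:ℝ) (s₀:ℝ) < δ := ht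
    have hnd : ‖f ↑t - f ↑s₀‖ < c := by
      rw [← dist_eq_norm]
      exact hδ hdist
    refine ContinuousLinearMap.isPositive_def'.mpr ⟨(key ↑t (habs t)).1, fun x => ?_⟩
    have hsplit : (f ↑t).reApplyInnerSelf x
        = (f ↑s₀).reApplyInnerSelf x + RCLike.re (inner ℂ (((f ↑t - f ↑s₀) : E →L[ℂ] E) x) x : ℂ) := by
      simp only [ContinuousLinearMap.reApplyInnerSelf_apply, ContinuousLinearMap.sub_apply]
      rw [inner_sub_left, map_sub]
      ring
    rw [hsplit]
    have hb1 : |RCLike.re (inner ℂ (((f ↑t - f ↑s₀) : E →L[ℂ] E) x) x : ℂ)| ≤ c * (‖x‖ * ‖x‖) := by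
      calc |RCLike.re (inner ℂ (((f ↑t - f ↑s₀) : E →L[ℂ] E) x) x : ℂ)|
          ≤ ‖(inner ℂ (((f ↑t - f ↑s₀) : E →L[ℂ] E) x) x : ℂ)‖ := RCLike.abs_re_le_norm _
        _ ≤ ‖((f ↑t - f ↑s₀) : E →L[ℂ] E) x‖ * ‖x‖ := norm_inner_le_norm _ _
        _ ≤ (‖(f ↑t - f ↑s₀ : E →L[ℂ] E)‖ * ‖x‖) * ‖x‖ :=
            mul_le_mul_of_nonneg_right ((f ↑t - f ↑s₀).le_opNorm x) (norm_nonneg _)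
        _ ≤ (c * ‖x‖) * ‖x‖ := by
            have := mul_le_mul_of_nonneg_right (le_of_lt hnd) (norm_nonneg x)
            exact mul_le_mul_of_nonneg_right
              (mul_le_mul_of_nonneg_right (le_of_lt hnd) (norm_nonneg x)) (norm_nonneg x)
        _ = c * (‖x‖ * ‖x‖) := by ring
    have hb2 := hcoer x
    have := abs_le.mp hb1
    linarith [this.1]
  have hSne : S.Nonempty := by
    refine ⟨⟨0, by constructor <;> norm_num⟩, ?_⟩
    have : f 0 = 1 := by
      rw [hf]
      push_cast
      simp
    simp only [hS, Set.mem_setOf_eq]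
    rw [this]
    exact ContinuousLinearMap.isPositive_one
  have hSuniv : S = Set.univ := IsClopen.eq_univ ⟨hSclosed, hSopen⟩ hSne
  have h1mem : (⟨1, by constructor <;> norm_num⟩ : Set.Icc (0:ℝ) 1) ∈ S := by
    rw [hSuniv]; trivial
  have hf1 : f 1 = (1 + B) * (1 + A + A * B) := by
    rw [hf]
    push_cast
    simp
  constructor
  · have := h1mem
    simp only [hS, Set.mem_setOf_eq] at this
    rwa [hf1] at this
  · have := (key 1 (by norm_num)).2
    rwa [hf1] at this

end AbstractHalmos

/-- If `T` is self-adjoint with `‖T‖ < 1` and satisfies the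
braid relation, then `P₃ = (1 + T₂)(1 + T₁ + T₁T₂)` is strictly positive
(positive and invertible). -/
theorem P3_strictly_positive_of_braided_norm_lt_one (d : ℕ) (hd : 1 ≤ d)
    (T : EuclideanSpace ℂ (Fin d × Fin d) →L[ℂ] EuclideanSpace ℂ (Fin d × Fin d))
    (hsa : IsSelfAdjoint T) (hn : ‖T‖ < 1)
    (hbraid : ampl1 d T ∘L ampl2 d T ∘L ampl1 d T = ampl2 d T ∘L ampl1 d T ∘L ampl2 d T) :
    ((1 + ampl2 d T) ∘L (1 + ampl1 d T + ampl1 d T ∘L ampl2 d T)).IsPositive ∧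
      IsUnit ((1 + ampl2 d T) ∘L (1 + ampl1 d T + ampl1 d T ∘L ampl2 d T)) := by
  haveI : NeZero d := ⟨by omega⟩
  haveI : Nontrivial (EuclideanSpace ℂ (Fin d × Fin d × Fin d)) := by
    have i0 : Fin d := ⟨0, by omega⟩
    refine nontrivial_of_ne (EuclideanSpace.single (i0, i0, i0) (1:ℂ)) 0 fun h => ?_
    have h1 := congrArg (fun v => v (i0, i0, i0)) h
    rw [EuclideanSpace.single_apply] at h1
    simp at h1
  have hbraid' : ampl1 d T * ampl2 d T * ampl1 d T
      = ampl2 d T * ampl1 d T * ampl2 d T := hbraid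
  have h := abstract_P3 (ampl1_isSelfAdjoint T hsa) (ampl2_isSelfAdjoint T hsa)
    (lt_of_le_of_lt (ampl1_norm_le T) hn) (lt_of_le_of_lt (ampl2_norm_le T) hn) hbraid'
  exact h
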